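/- Let R be a commutative ring in which 3 is invertible and let θ be a ring automorphism of R with θ(θ(θ(x))) = x for all x. Let R_θ be the fixed subring of θ and let 𝔪_θ be a maximal ideal of R_θ. Then 𝔪_θ = R_θ ∩ 𝔪_θR; that is, the contraction to R_θ of the ideal of R generated by (the image of) 𝔪_θ equals 𝔪_θ. -/
import Mathlib


/-- Over a commutative ring `R` with `3` invertible and a ring automorphism `θ` of order
dividing 3, for any maximal ideal `𝔪_θ` of the fixed subring `R_θ`,
one has `𝔪_θ = R_θ ∩ 𝔪_θ R`. -/
theorem stmt_4 {R : Type*} [CommRing R] (h3 : IsUnit (3 : R))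
    (θ : R ≃+* R) (hθ : ∀ x, θ (θ (θ x)) = x)
    (𝔪θ : Ideal (RingHom.eqLocus (θ : R →+* R) (RingHom.id R)))
    (hm : 𝔪θ.IsMaximal) :
    𝔪θ = Ideal.comap (RingHom.eqLocus (θ : R →+* R) (RingHom.id R)).subtype
      (Ideal.map (RingHom.eqLocus (θ : R →+* R) (RingHom.id R)).subtype 𝔪θ) := by
  let S : Subring R := RingHom.eqLocus (θ : R →+* R) (RingHom.id R)
  obtain ⟨u, hu⟩ := h3
  set e : R := ↑u⁻¹ with he
  have he3 : e * 3 = 1 := by rw [he, ← hu]; exact u.inv_mul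
  have hθ3 : θ (3 : R) = 3 := by
    have : (3 : R) = 1 + 1 + 1 := by ring
    rw [this]; simp
  have hθe : θ e = e := by
    have h1 : θ e * 3 = 1 := by rw [← hθ3, ← map_mul, he3, map_one]
    calc θ e = θ e * (e * 3) := by rw [he3, mul_one]
    _ = (θ e * 3) * e := by ring
    _ = e := by rw [h1, one_mul]
  set tr : R → R := fun r => e * (r + θ r + θ (θ r)) with htrdef
  have htr : ∀ r, θ (tr r) = tr r := by
    intro r
    simp only [htrdef, map_mul, map_add, hθe, hθ r]
    ring
  have htrS : ∀ r, tr r ∈ S := fun r => htr r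
  have hmulS : ∀ (a m : R), θ m = m → tr (a * m) = tr a * m := by
    intro a m hm'
    have h2 : θ (θ m) = m := by rw [hm', hm']
    simp only [htrdef, map_mul, hm', h2]
    ring
  have hfix : ∀ x : R, θ x = x → tr x = x := by
    intro x hx
    have h2 : θ (θ x) = x := by rw [hx, hx]
    simp only [htrdef, hx, h2]
    calc e * (x + x + x) = (e * 3) * x := by ring
    _ = x := by rw [he3, one_mul]
  apply le_antisymm Ideal.le_comap_map
  intro x hx
  have hx' : (x : R) ∈ Submodule.span R (S.subtype '' 𝔪θ) := hx
  have key : ∀ a : R, ∀ h : tr (a * (x : R)) ∈ S, (⟨tr (a * x), h⟩ : S) ∈ 𝔪θ := by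
    refine Submodule.span_induction ?_ ?_ ?_ ?_ hx'
    · rintro _ ⟨m, hmm, rfl⟩ a h
      have heq : (⟨tr (a * (S.subtype m)), h⟩ : S) = ⟨tr a, htrS a⟩ * m :=
        Subtype.ext (hmulS a m m.2)
      rw [heq]
      exact Ideal.mul_mem_left _ _ hmm
    · intro a h
      have heq : (⟨tr (a * 0), h⟩ : S) = 0 := Subtype.ext (by simp [htrdef])
      rw [heq]; exact zero_mem _
    · intro y z _ _ hy hz a h
      have heq : (⟨tr (a * (y + z)), h⟩ : S) =
          ⟨tr (a * y), htrS _⟩ + ⟨tr (a * z), htrS _⟩ := by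
        apply Subtype.ext
        show tr (a * (y + z)) = tr (a * y) + tr (a * z)
        have : a * (y + z) = a * y + a * z := by ring
        rw [this]
        simp only [htrdef, map_add]
        ring
      rw [heq]
      exact add_mem (hy a _) (hz a _)
    · intro r y _ hy a h
      have heq : (⟨tr (a * (r • y)), h⟩ : S) = ⟨tr ((a * r) * y), htrS _⟩ := by
        apply Subtype.ext
        show tr (a * (r • y)) = tr ((a * r) * y)
        congr 1
        rw [smul_eq_mul]; ring
      rw [heq]
      exact hy (a * r) _
  have := key 1 (htrS _)
  have hxeq : (⟨tr (1 * (x : R)), htrS _⟩ : S) = x := by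
    apply Subtype.ext
    show tr (1 * (x : R)) = x
    rw [one_mul]
    exact hfix _ x.2
  rwa [hxeq] at this
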